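/- Let X be a complete, locally compact, geodesic hyperbolic metric space and let B be a Busemann function on X (associated with a geodesic ray). Then for every x ∈ X there exists a B-ray γ : [0,∞) → X with γ(0) = x. -/

import Mathlib

open Set Metric Filter
open scoped ENNReal NNReal

/-- `γ`, restricted to `[0, dist x y]`, is a unit-speed (arclength-parameterized) geodesic
segment from `x` to `y`. -/
def IsGeodSegment {X : Type*} [MetricSpace X] (γ : ℝ → X) (x y : X) : Prop :=
  γ 0 = x ∧ γ (dist x y) = y ∧
    ∀ s ∈ Set.Icc (0 : ℝ) (dist x y), ∀ t ∈ Set.Icc (0 : ℝ) (dist x y),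
      dist (γ s) (γ t) = |s - t|

/-- A metric space is geodesic if any two points are joined by a geodesic segment. -/
def GeodesicMS (X : Type*) [MetricSpace X] : Prop :=
  ∀ x y : X, ∃ γ : ℝ → X, IsGeodSegment γ x y

/-- The image (side) of a geodesic segment from `x` to `y`. -/
def segImg {X : Type*} [MetricSpace X] (γ : ℝ → X) (x y : X) : Set X :=
  γ '' Set.Icc 0 (dist x y)

/-- `X` is `δ`-hyperbolic: each side of each geodesic triangle is contained in the closed
`δ`-neighborhood of the union of the two other sides.  (Since the vertices `x y z` and the
three sides are universally quantified, the condition for the single side `γ_{xy}` implies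
it for all three sides.) -/
def DeltaHyp (X : Type*) [MetricSpace X] (δ : ℝ) : Prop :=
  ∀ (x y z : X) (gxy gxz gyz : ℝ → X),
    IsGeodSegment gxy x y → IsGeodSegment gxz x z → IsGeodSegment gyz y z →
      ∀ s ∈ Set.Icc (0 : ℝ) (dist x y),
        ∃ w ∈ segImg gxz x z ∪ segImg gyz y z, dist (gxy s) w ≤ δ

/-- `X` is hyperbolic if it is `δ`-hyperbolic for some `δ ≥ 0`. -/
def GromovHyperbolic (X : Type*) [MetricSpace X] : Prop :=
  ∃ δ : ℝ, 0 ≤ δ ∧ DeltaHyp X δ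

/-- The Gromov product `(y⬝z)_x`. -/
noncomputable def gp {X : Type*} [MetricSpace X] (y z x : X) : ℝ :=
  (dist y x + dist z x - dist y z) / 2

/-- A geodesic ray (unit-speed, defined on `[0,∞)`). -/
def IsRay {X : Type*} [MetricSpace X] (γ : ℝ → X) : Prop :=
  ∀ s ∈ Set.Ici (0 : ℝ), ∀ t ∈ Set.Ici (0 : ℝ), dist (γ s) (γ t) = |s - t|

/-- `B` is the Busemann function associated to some geodesic ray. -/
def IsBusemann {X : Type*} [MetricSpace X] (B : X → ℝ) : Prop :=
  ∃ γ : ℝ → X, IsRay γ ∧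
    ∀ x : X, Filter.Tendsto (fun t => dist x (γ t) - t) Filter.atTop (nhds (B x))

/-- `γ` is a `B`-ray: a geodesic ray along which `B` decreases with unit speed. -/
def IsBRay {X : Type*} [MetricSpace X] (B : X → ℝ) (γ : ℝ → X) : Prop :=
  IsRay γ ∧ ∀ t ∈ Set.Ici (0 : ℝ), B (γ t) = B (γ 0) - t

/-- A `T`-function on `[α,ω]`: `f t = |t - m| + k` for some `m ∈ [α,ω]` and `k ∈ ℝ`. -/
def IsTFun (f : ℝ → ℝ) (α ω : ℝ) : Prop :=
  ∃ m ∈ Set.Icc α ω, ∃ k : ℝ, ∀ t ∈ Set.Icc α ω, f t = |t - m| + k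

/-- A `δ`-`T`-function on `[α,ω]`: uniformly `δ`-close to a `T`-function. -/
def IsDeltaTFun (δ : ℝ) (f : ℝ → ℝ) (α ω : ℝ) : Prop :=
  ∃ g : ℝ → ℝ, IsTFun g α ω ∧ ∀ t ∈ Set.Icc α ω, |f t - g t| ≤ δ

/-- The interior (induced length) metric associated to the metric of `Z`: the infimum of
lengths (total variations) of continuous paths joining the two points, with value in `ℝ≥0∞`. -/
noncomputable def intDist {Z : Type*} [MetricSpace Z] (p q : Z) : ℝ≥0∞ :=
  ⨅ (c : ℝ → Z) (_ : ContinuousOn c (Set.Icc 0 1)) (_ : c 0 = p) (_ : c 1 = q),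
    eVariationOn c (Set.Icc (0 : ℝ) 1)

/-- The "Gromov product with a Busemann function": `(x'⬝B)_x = ½(d(x,x') + B(x) - B(x'))`. -/
noncomputable def gpB {X : Type*} [MetricSpace X] (B : X → ℝ) (x x' : X) : ℝ :=
  (dist x x' + B x - B x') / 2

/-- Unit-speed geodesic segment with respect to a bare distance function `D`. -/
def IsGeodSegmentD {Z : Type*} (D : Z → Z → ℝ) (γ : ℝ → Z) (x y : Z) : Prop :=
  γ 0 = x ∧ γ (D x y) = y ∧
    ∀ s ∈ Set.Icc (0 : ℝ) (D x y), ∀ t ∈ Set.Icc (0 : ℝ) (D x y), D (γ s) (γ t) = |s - t|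

/-- `δ`-hyperbolicity with respect to a bare distance function `D`. -/
def DeltaHypD {Z : Type*} (D : Z → Z → ℝ) (δ : ℝ) : Prop :=
  ∀ (x y z : Z) (gxy gxz gyz : ℝ → Z),
    IsGeodSegmentD D gxy x y → IsGeodSegmentD D gxz x z → IsGeodSegmentD D gyz y z →
      ∀ s ∈ Set.Icc (0 : ℝ) (D x y),
        ∃ w ∈ (gxz '' Set.Icc 0 (D x z)) ∪ (gyz '' Set.Icc 0 (D y z)), D (gxy s) w ≤ δ
/-- In a geodesic space, one can move from `x` towards `y` staying in the ball of radius `r`. -/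
lemma reach_aux {X : Type*} [MetricSpace X]
    (hgeo : ∀ x y : X, ∃ γ : ℝ → X, γ 0 = x ∧ γ (dist x y) = y ∧
      ∀ s ∈ Set.Icc (0 : ℝ) (dist x y), ∀ t ∈ Set.Icc (0 : ℝ) (dist x y),
        dist (γ s) (γ t) = |s - t|)
    (x y : X) {r : ℝ} (hr : 0 ≤ r) :
    ∃ q : X, dist x q ≤ r ∧ dist q y ≤ max (dist x y - r) 0 := by
  obtain ⟨γ, h0, h1, hd⟩ := hgeo x y
  set m := min r (dist x y) with hm
  have hm0 : 0 ≤ m := le_min hr dist_nonneg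
  have hmd : m ≤ dist x y := min_le_right _ _
  refine ⟨γ m, ?_, ?_⟩
  · have h := hd 0 ⟨le_refl 0, dist_nonneg⟩ m ⟨hm0, hmd⟩
    rw [h0] at h
    rw [h]
    rw [abs_of_nonpos (by linarith)]
    simp [min_le_left r (dist x y), hm]
  · have h := hd m ⟨hm0, hmd⟩ (dist x y) ⟨dist_nonneg, le_refl _⟩
    rw [h1] at h
    rw [h, abs_of_nonpos (by linarith), neg_sub]
    rcases le_total r (dist x y) with hc | hc
    · rw [hm, min_eq_left hc]; exact le_max_left _ _
    · rw [hm, min_eq_right hc]; simp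

lemma proper_aux {X : Type*} [MetricSpace X] [CompleteSpace X] [LocallyCompactSpace X]
    (hgeo : ∀ x y : X, ∃ γ : ℝ → X, γ 0 = x ∧ γ (dist x y) = y ∧
      ∀ s ∈ Set.Icc (0 : ℝ) (dist x y), ∀ t ∈ Set.Icc (0 : ℝ) (dist x y),
        dist (γ s) (γ t) = |s - t|) :
    ProperSpace X := by
  constructor
  intro x r₀
  by_contra hc
  have hr₀ : 0 ≤ r₀ := by
    by_contra h
    exact hc (by rw [closedBall_eq_empty.2 (by linarith)]; exact isCompact_empty)
  set T : Set ℝ := {r : ℝ | 0 ≤ r ∧ r ≤ r₀ ∧ IsCompact (closedBall x r)} with hT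
  have h0T : (0 : ℝ) ∈ T := ⟨le_refl 0, hr₀, by rw [closedBall_zero]; exact isCompact_singleton⟩
  have hTne : T.Nonempty := ⟨0, h0T⟩
  have hTbdd : BddAbove T := ⟨r₀, fun r hr => hr.2.1⟩
  set R := sSup T with hR
  have hR0 : 0 ≤ R := le_csSup hTbdd h0T
  have hRr₀ : R ≤ r₀ := csSup_le hTne fun r hr => hr.2.1
  -- closedBall x R is compact
  have hcomp : IsCompact (closedBall x R) := by
    refine TotallyBounded.isCompact_of_isClosed ?_ isClosed_closedBall
    rw [Metric.totallyBounded_iff]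
    intro ε hε
    obtain ⟨r, hrT, hrR⟩ := exists_lt_of_lt_csSup hTne (show R - ε/3 < R by linarith)
    obtain ⟨t, htfin, hcov⟩ := Metric.totallyBounded_iff.1 hrT.2.2.totallyBounded (ε/3)
      (by linarith)
    refine ⟨t, htfin, fun y hy => ?_⟩
    obtain ⟨q, hq1, hq2⟩ := reach_aux hgeo x y hrT.1
    have hdxy : dist x y ≤ R := by rw [dist_comm]; exact hy
    have hq2' : dist q y < ε/3 := by
      have h1 : (dist x y - r) ⊔ 0 < ε/3 := max_lt (by linarith) (by linarith)
      exact lt_of_le_of_lt hq2 h1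
    have hq : q ∈ closedBall x r := by rw [mem_closedBall, dist_comm]; exact hq1
    obtain ⟨z, hz⟩ := mem_iUnion₂.1 (hcov hq)
    refine mem_iUnion₂.2 ⟨z, hz.1, ?_⟩
    rw [mem_ball] at hz ⊢
    have := dist_triangle y q z
    rw [dist_comm y q] at this
    calc dist y z ≤ dist q y + dist q z := by rw [dist_comm q y] at this ⊢; exact this
    _ < ε := by linarith [hz.2]
  -- R < r₀ (else contradiction with hc)
  rcases eq_or_lt_of_le hRr₀ with hRe | hRlt
  · exact hc (hRe ▸ hcomp)
  -- grow the compact ball a little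
  obtain ⟨K', hK'comp, hK'sub⟩ := exists_compact_superset hcomp
  obtain ⟨δ, hδ, hth⟩ := hcomp.exists_thickening_subset_open isOpen_interior hK'sub
  set r' := min r₀ (R + δ/2) with hr'
  have hr'R : R < r' := lt_min hRlt (by linarith)
  have hsub : closedBall x r' ⊆ cthickening (δ/2) (closedBall x R) := by
    intro y hy
    obtain ⟨q, hq1, hq2⟩ := reach_aux hgeo x y hR0
    have hdxy : dist x y ≤ R + δ/2 := by
      rw [dist_comm]; exact le_trans hy (min_le_right _ _)
    have hq2' : dist y q ≤ δ/2 := by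
      rw [dist_comm]
      exact le_trans hq2 (max_le (by linarith) (by linarith))
    exact mem_cthickening_of_dist_le y q (δ/2) _ (by rwa [mem_closedBall, dist_comm]) hq2'
  have hcomp' : IsCompact (closedBall x r') := by
    refine IsCompact.of_isClosed_subset hK'comp isClosed_closedBall ?_
    refine hsub.trans (le_trans ?_ (hth.trans interior_subset))
    exact cthickening_subset_thickening' hδ (by linarith) _
  have : r' ≤ R := le_csSup hTbdd ⟨le_trans hR0 hr'R.le, min_le_left _ _, hcomp'⟩
  linarith

/-- Lemma 3: Let `X` be a complete, locally compact, geodesic hyperbolic metric space and `B`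
a Busemann function on `X`.  Then for every `x ∈ X` there exists a `B`-ray `γ` with
`γ(0) = x`. -/
theorem stmt4 {X : Type*} [MetricSpace X] [CompleteSpace X] [LocallyCompactSpace X]
    (hgeo : GeodesicMS X) (hhyp : GromovHyperbolic X)
    (B : X → ℝ) (hB : IsBusemann B) (x : X) :
    ∃ γ : ℝ → X, IsBRay B γ ∧ γ 0 = x := by
  haveI : ProperSpace X := proper_aux hgeo
  obtain ⟨γ₀, hray₀, hbus⟩ := hB
  -- B is 1-Lipschitz, hence continuous
  have hlip : ∀ p q : X, |B p - B q| ≤ dist p q := by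
    intro p q
    have h := ((hbus p).sub (hbus q)).abs
    have h' : ∀ t : ℝ, |(dist p (γ₀ t) - t) - (dist q (γ₀ t) - t)| ≤ dist p q := by
      intro t
      have : (dist p (γ₀ t) - t) - (dist q (γ₀ t) - t) = dist p (γ₀ t) - dist q (γ₀ t) := by ring
      rw [this]
      exact abs_dist_sub_le _ _ _
    exact le_of_tendsto h (Filter.Eventually.of_forall h')
  have hcont : Continuous B := by
    refine (LipschitzWith.of_dist_le_mul (K := 1) fun p q => ?_).continuous
    rw [Real.dist_eq, NNReal.coe_one, one_mul]
    exact hlip p q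
  -- upper bound for B via points on the ray
  have hub : ∀ (p : X) (u : ℝ), 0 ≤ u → B p ≤ dist p (γ₀ u) - u := by
    intro p u hu
    refine le_of_tendsto (hbus p) ?_
    filter_upwards [eventually_ge_atTop u] with t ht
    have ht0 : 0 ≤ t := le_trans hu ht
    have hd : dist (γ₀ u) (γ₀ t) = t - u := by
      rw [hray₀ u (mem_Ici.2 hu) t (mem_Ici.2 ht0), abs_of_nonpos (by linarith)]; ring
    have := dist_triangle p (γ₀ u) (γ₀ t)
    linarith
  -- B x as a limit along natural numbers
  have hBx : Tendsto (fun n : ℕ => dist x (γ₀ n) - (n : ℝ)) atTop (nhds (B x)) :=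
    (hbus x).comp tendsto_natCast_atTop_atTop
  -- geodesic segments from x to γ₀ n
  have hσ : ∀ n : ℕ, ∃ σ : ℝ → X, IsGeodSegment σ x (γ₀ n) := fun n => hgeo x (γ₀ n)
  choose σ hσ0 hσ1 hσd using fun n => hσ n
  set L : ℕ → ℝ := fun n => dist x (γ₀ n) with hL
  have hL0 : ∀ n, 0 ≤ L n := fun n => dist_nonneg
  have hLlarge : ∀ s : ℝ, ∀ᶠ n : ℕ in atTop, s ≤ L n := by
    intro s
    filter_upwards [tendsto_natCast_atTop_atTop.eventually_ge_atTop (s + dist (γ₀ 0) x)]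
      with n hn
    have h1 : dist (γ₀ 0) (γ₀ n) = (n : ℝ) := by
      rw [hray₀ 0 Set.self_mem_Ici (n : ℝ) (mem_Ici.2 (Nat.cast_nonneg n)), abs_of_nonpos (by simp)]; ring
    have := dist_triangle (γ₀ 0) x (γ₀ n)
    rw [h1] at this
    simp only [hL]
    linarith
  -- the approximating points
  set y : ℕ → ℝ → X := fun n s => if 0 ≤ s ∧ s ≤ L n then σ n s else x with hy
  have hybd : ∀ n s, dist (y n s) x ≤ max s 0 := by
    intro n s
    simp only [hy]
    split_ifs with h
    · have := hσd n 0 ⟨le_rfl, hL0 n⟩ s ⟨h.1, h.2⟩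
      rw [hσ0 n] at this
      rw [dist_comm, this, abs_of_nonpos (by linarith)]
      simp [h.1]
    · simp
  -- ultrafilter limit
  set U : Ultrafilter ℕ := Filter.hyperfilter ℕ with hU
  have hUatTop : (U : Filter ℕ) ≤ atTop := by
    rw [← Nat.cofinite_eq_atTop]
    exact Filter.hyperfilter_le_cofinite
  have key : ∀ s : ℝ, ∃ p : X, Tendsto (fun n => y n s) (U : Filter ℕ) (nhds p) := by
    intro s
    have hc : IsCompact (closedBall x (max s 0)) := isCompact_closedBall _ _
    have hle : (Ultrafilter.map (fun n => y n s) U : Filter X) ≤ 𝓟 (closedBall x (max s 0)) := by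
      rw [Ultrafilter.coe_map, Filter.le_principal_iff, Filter.mem_map]
      exact Filter.univ_mem' fun n => by
        simpa [mem_closedBall] using hybd n s
    obtain ⟨p, _, hp⟩ := hc.ultrafilter_le_nhds _ hle
    exact ⟨p, by rwa [Ultrafilter.coe_map] at hp⟩
  choose f hf using key
  have hf0 : f 0 = x := by
    have h1 : (fun n => y n 0) = fun _ => x := by
      funext n
      simp only [hy]
      rw [if_pos ⟨le_rfl, hL0 n⟩, hσ0 n]
    exact tendsto_nhds_unique (h1 ▸ hf 0) tendsto_const_nhds
  -- f is a ray
  have hrayf : IsRay f := by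
    intro s hs' t ht'
    have hs : 0 ≤ s := hs'
    have ht : 0 ≤ t := ht'
    have h1 : Tendsto (fun n => dist (y n s) (y n t)) (U : Filter ℕ) (nhds (dist (f s) (f t))) :=
      (hf s).dist (hf t)
    have h2 : ∀ᶠ n in (U : Filter ℕ), dist (y n s) (y n t) = |s - t| := by
      filter_upwards [hUatTop (hLlarge (max s t))] with n hn
      have hsL : s ≤ L n := le_trans (le_max_left _ _) hn
      have htL : t ≤ L n := le_trans (le_max_right _ _) hn
      simp only [hy]
      rw [if_pos (⟨hs, hsL⟩ : 0 ≤ s ∧ s ≤ L n), if_pos (⟨ht, htL⟩ : 0 ≤ t ∧ t ≤ L n)]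
      exact hσd n s ⟨hs, hsL⟩ t ⟨ht, htL⟩
    have h3 : Tendsto (fun n => dist (y n s) (y n t)) (U : Filter ℕ) (nhds |s - t|) :=
      Tendsto.congr' (h2.mono fun n hn => hn.symm) tendsto_const_nhds
    exact tendsto_nhds_unique h1 h3
  -- B decreases with unit speed along f
  have hBf : ∀ s : ℝ, 0 ≤ s → B (f s) = B x - s := by
    intro s hs
    have h1 : Tendsto (fun n => B (y n s)) (U : Filter ℕ) (nhds (B (f s))) :=
      (hcont.tendsto (f s)).comp (hf s)
    have h2 : Tendsto (fun n : ℕ => L n - (n : ℝ) - s) (U : Filter ℕ) (nhds (B x - s)) :=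
      (hBx.sub_const s).mono_left hUatTop
    have h3 : ∀ᶠ n in (U : Filter ℕ), B (y n s) ≤ L n - (n : ℝ) - s := by
      filter_upwards [hUatTop (hLlarge s)] with n hn
      simp only [hy]
      rw [if_pos (⟨hs, hn⟩ : 0 ≤ s ∧ s ≤ L n)]
      have hd : dist (σ n s) (γ₀ n) = L n - s := by
        have := hσd n s ⟨hs, hn⟩ (L n) ⟨hL0 n, le_rfl⟩
        rw [hσ1 n] at this
        rw [this, abs_of_nonpos (by linarith)]; ring
      have := hub (σ n s) (n : ℝ) (Nat.cast_nonneg n)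
      rw [hd] at this
      linarith
    have hle : B (f s) ≤ B x - s := le_of_tendsto_of_tendsto h1 h2 h3
    have hge : B x - B (f s) ≤ s := by
      have hd : dist x (f s) = s := by
        have := hrayf 0 Set.self_mem_Ici s (mem_Ici.2 hs)
        rw [hf0, abs_of_nonpos (by linarith)] at this
        rw [this]; ring
      have := hlip x (f s)
      rw [hd] at this
      exact le_trans (le_abs_self _) this
    linarith
  refine ⟨f, ⟨hrayf, fun t ht => ?_⟩, hf0⟩
  rw [hf0, hBf t (mem_Ici.1 ht)]
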